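/- Normalisation of the adjoint equation yields the normal equation of the boundary system: if η : ℝ → E satisfies HasDerivAt η (-(L t).adjoint (η t)) t for every t ∈ ℝ and η t ≠ 0 for every t, then the normalised function n t := ‖η t‖⁻¹ • η t satisfies HasDerivAt n (-(L t).adjoint (n t) + ⟪n t, (L t).adjoint (n t)⟫ • n t) t for every t ∈ ℝ. -/

import Mathlib

open MeasureTheory Set Metric
open scoped RealInnerProductSpace

noncomputable section

abbrev Euc (d : ℕ) : Type := EuclideanSpace ℝ (Fin d)

/-- Normalising a nonvanishing solution of the adjoint equation yields a solution of the
normal equation of the boundary system. -/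
theorem normalised_adjoint_solves_boundary_normal_equation
    (d : ℕ) (hd : 1 ≤ d)
    (L : ℝ → (Euc d →L[ℝ] Euc d)) (hL : Continuous L)
    (η : ℝ → Euc d)
    (hη : ∀ t : ℝ, HasDerivAt η (-(ContinuousLinearMap.adjoint (L t) (η t))) t)
    (hne : ∀ t : ℝ, η t ≠ 0) :
    ∀ t : ℝ, HasDerivAt (fun τ => ‖η τ‖⁻¹ • η τ)
      (-(ContinuousLinearMap.adjoint (L t) (‖η t‖⁻¹ • η t)) +
        ⟪‖η t‖⁻¹ • η t, ContinuousLinearMap.adjoint (L t) (‖η t‖⁻¹ • η t)⟫ •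
          (‖η t‖⁻¹ • η t)) t := by
  intro t
  set A := ContinuousLinearMap.adjoint (L t) with hA
  set r : ℝ := ‖η t‖ with hrdef
  have hr : r ≠ 0 := norm_ne_zero_iff.mpr (hne t)
  have hrpos : 0 < r := norm_pos_iff.mpr (hne t)
  -- derivative of ‖η‖²
  have h1 : HasDerivAt (fun τ => ‖η τ‖ ^ 2) (2 * ⟪η t, -(A (η t))⟫) t :=
    (hη t).norm_sq
  -- derivative of ‖η‖ = sqrt(‖η‖²)
  have h2 : HasDerivAt (fun τ => ‖η τ‖) (2 * ⟪η t, -(A (η t))⟫ / (2 * Real.sqrt (‖η t‖ ^ 2))) t := by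
    have := h1.sqrt (by positivity)
    simpa [Real.sqrt_sq (norm_nonneg _)] using this
  have h2' : HasDerivAt (fun τ => ‖η τ‖) (⟪η t, -(A (η t))⟫ / r) t := by
    have hs : Real.sqrt (‖η t‖ ^ 2) = r := by
      rw [Real.sqrt_sq (norm_nonneg _)]
    rw [hs] at h2
    have : 2 * ⟪η t, -(A (η t))⟫ / (2 * r) = ⟪η t, -(A (η t))⟫ / r := by
      field_simp
    rwa [this] at h2
  -- derivative of ‖η‖⁻¹
  have h3 : HasDerivAt (fun τ => ‖η τ‖⁻¹) (-(⟪η t, -(A (η t))⟫ / r) / r ^ 2) t :=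
    h2'.inv hr
  -- product rule
  have h4 := h3.smul (hη t)
  convert h4 using 1
  any_goals rfl
  simp only [← hrdef, _root_.map_smul, map_neg, smul_neg, real_inner_smul_left, real_inner_smul_right,
    inner_neg_neg, inner_neg_right, inner_neg_left, ← hA]
  rw [real_inner_comm (A (η t)) (η t)]
  match_scalars
  field_simp
  ring
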